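/- Define φ(x) = exp(−B·x) and λ = k·m̄·B. Then for every x ∈ ℝ: (1/2)σ²x·φ''(x) − (1/2)q(1−q)(μ²/ς²)x·φ(x) + (k·m̄ − β₁x)·φ'(x) + (q(1−ρ²)σ²x/(2(1−q)))·φ'(x)²/φ(x) = −λ·φ(x). -/

import Mathlib

/-- Heston model: `(λ, φ)` with `φ(x) = exp(-Bx)` and `λ = k·m̄·B` solves the ergodic HJB
equation `(1/2)σ²xφ'' - (1/2)q(1-q)(μ²/ς²)xφ + (km̄ - β₁x)φ'
+ (q(1-ρ²)σ²x/(2(1-q)))φ'²/φ = -λφ`. -/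
theorem stmt12 (k m μ ς σ ρ q : ℝ)
    (hk : 0 < k) (hm : 0 < m) (hμ : μ ≠ 0) (hς : 0 < ς) (hσ : 0 < σ)
    (hρ : ρ ∈ Set.Ioo (-1 : ℝ) 1) (hq : q ∈ Set.Ioo (0 : ℝ) 1)
    (β₁ β₂ B lam : ℝ)
    (hβ₁ : β₁ = k + q * μ * ρ * σ / ς)
    (hβ₂ : β₂ = Real.sqrt (β₁ ^ 2 + q * (1 - q * ρ ^ 2) * μ ^ 2 * σ ^ 2 / ς ^ 2))
    (hB : B = (1 - q) * (β₂ - β₁) / ((1 - q * ρ ^ 2) * σ ^ 2))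
    (hlam : lam = k * m * B)
    (φ : ℝ → ℝ) (hφ : ∀ x, φ x = Real.exp (-B * x)) :
    ∀ x, (1 / 2) * σ ^ 2 * x * deriv (deriv φ) x
        - (1 / 2) * q * (1 - q) * (μ ^ 2 / ς ^ 2) * x * φ x
        + (k * m - β₁ * x) * deriv φ x
        + (q * (1 - ρ ^ 2) * σ ^ 2 * x / (2 * (1 - q))) * (deriv φ x) ^ 2 / φ x
      = -lam * φ x := by
  obtain ⟨hq0, hq1⟩ := hq
  obtain ⟨hρ1, hρ2⟩ := hρ
  have hφe : φ = fun x => Real.exp (-B * x) := funext hφ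
  have hder : ∀ (c : ℝ) (x : ℝ),
      HasDerivAt (fun y => Real.exp (-B * y)) (-B * Real.exp (-B * x)) x := by
    intro c x
    have h1 : HasDerivAt (fun y : ℝ => -B * y) (-B) x := by
      simpa using (hasDerivAt_id x).const_mul (-B)
    simpa [mul_comm] using h1.exp
  have hd1 : deriv φ = fun x => -B * Real.exp (-B * x) := by
    funext x
    rw [hφe]
    exact (hder 0 x).deriv
  have hd2 : deriv (deriv φ) = fun x => -B * (-B * Real.exp (-B * x)) := by
    funext x
    rw [hd1]
    exact (((hder 0 x)).const_mul (-B)).deriv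
  intro x
  have e1 : deriv φ x = -B * Real.exp (-B * x) := by rw [hd1]
  have e2 : deriv (deriv φ) x = -B * (-B * Real.exp (-B * x)) := by rw [hd2]
  rw [e2, e1, hφ]
  obtain ⟨E, hE⟩ : ∃ E, Real.exp (-B * x) = E := ⟨_, rfl⟩
  have hEpos : 0 < E := hE ▸ Real.exp_pos _
  rw [hE]
  have hqρ : 0 < 1 - q * ρ ^ 2 := by nlinarith [sq_nonneg ρ]
  have hc : (1 - q * ρ ^ 2) * σ ^ 2 ≠ 0 := by positivity
  have h1q : (1 - q) ≠ 0 := by linarith [hq1]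
  have hςne : (ς : ℝ) ≠ 0 := hς.ne'
  have hβ₂sq : β₂ ^ 2 = β₁ ^ 2 + q * (1 - q * ρ ^ 2) * μ ^ 2 * σ ^ 2 / ς ^ 2 := by
    rw [hβ₂, sq, Real.mul_self_sqrt]
    positivity
  have hβ₂sq' : β₂ ^ 2 * ς ^ 2 = β₁ ^ 2 * ς ^ 2 + q * (1 - q * ρ ^ 2) * μ ^ 2 * σ ^ 2 := by
    field_simp at hβ₂sq
    linarith [hβ₂sq]
  have hBc : B * ((1 - q * ρ ^ 2) * σ ^ 2) = (1 - q) * (β₂ - β₁) := by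
    rw [hB]; field_simp
  have hPc : ((1 - q * ρ ^ 2) * σ ^ 2 * B ^ 2 * ς ^ 2 + 2 * (1 - q) * β₁ * B * ς ^ 2
      - q * (1 - q) ^ 2 * μ ^ 2) * ((1 - q * ρ ^ 2) * σ ^ 2) = 0 := by
    linear_combination ((B * ((1 - q * ρ ^ 2) * σ ^ 2) + (1 - q) * (β₂ - β₁)
        + 2 * (1 - q) * β₁) * ς ^ 2) * hBc + (1 - q) ^ 2 * hβ₂sq'
  have hquad : (1 - q * ρ ^ 2) * σ ^ 2 * B ^ 2 * ς ^ 2 + 2 * (1 - q) * β₁ * B * ς ^ 2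
      - q * (1 - q) ^ 2 * μ ^ 2 = 0 := by
    rcases mul_eq_zero.mp hPc with h | h
    · exact h
    · exact absurd h hc
  rw [hlam]
  field_simp
  linear_combination x * hquad
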